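/- For every real q > 1 and every natural number n > 1: if n is odd then ‖n‖_q > 1/(q²−1), and if n is even then ‖n‖_q ≤ 1/(q²(q−1)). Moreover, 1/(q²(q−1)) < 1/(q²−1) holds if and only if q > (1+√5)/2. -/

import Mathlib

/-- The q-norm of an integer n: sum of 1/q^k over positive integers k not dividing n. -/
noncomputable def qnorm (q : ℝ) (n : ℤ) : ℝ :=
  ∑' k : ℕ, if 1 ≤ k ∧ ¬ ((k : ℤ) ∣ n) then 1 / q ^ k else 0

lemma geom_shift {r : ℝ} (h0 : 0 ≤ r) (h1 : r < 1) (m : ℕ) :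
    ∑' j : ℕ, r ^ (j + m) = r ^ m / (1 - r) := by
  simp_rw [pow_add]
  rw [tsum_mul_right, tsum_geometric_of_lt_one h0 h1, div_eq_mul_inv, mul_comm]

theorem stmt_10 (q : ℝ) (hq : 1 < q) :
    (∀ n : ℕ, 1 < n → Odd n → 1 / (q ^ 2 - 1) < qnorm q (n : ℤ)) ∧
    (∀ n : ℕ, 1 < n → Even n → qnorm q (n : ℤ) ≤ 1 / (q ^ 2 * (q - 1))) ∧
    (1 / (q ^ 2 * (q - 1)) < 1 / (q ^ 2 - 1) ↔ (1 + Real.sqrt 5) / 2 < q) := by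
  have hq0 : 0 < q := lt_trans one_pos hq
  have hqinv1 : 1 / q < 1 := by rw [div_lt_one hq0]; exact hq
  have hqinv0 : (0:ℝ) ≤ 1 / q := by positivity
  have hsum : Summable (fun k : ℕ => (1/q) ^ k) := summable_geometric_of_lt_one hqinv0 hqinv1
  have hq2 : (0:ℝ) < q^2 - 1 := by nlinarith
  have hq3 : (0:ℝ) < q^2 * (q-1) := by nlinarith
  have hfsum : ∀ n : ℤ, Summable (fun k : ℕ =>
      if 1 ≤ k ∧ ¬ ((k : ℤ) ∣ n) then 1 / q ^ k else 0) := by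
    intro n
    refine Summable.of_nonneg_of_le (f := fun k : ℕ => (1/q)^k) ?_ ?_ hsum
    · intro k; split_ifs <;> positivity
    · intro k; split_ifs with h
      · simp [one_div_pow]
      · positivity
  refine ⟨?_, ?_, ?_⟩
  · -- odd case
    intro n hn hodd
    set f : ℕ → ℝ := fun k => if 1 ≤ k ∧ ¬ ((k : ℤ) ∣ (n:ℤ)) then 1 / q ^ k else 0 with hfdef
    set g : ℕ → ℝ := fun k => if Even k ∧ 1 ≤ k then 1 / q ^ k else 0 with hgdef
    have hgsum : Summable g := by
      refine Summable.of_nonneg_of_le (f := fun k : ℕ => (1/q)^k) ?_ ?_ hsum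
      · intro k; simp only [g]; split_ifs <;> positivity
      · intro k; simp only [g]; split_ifs with h
        · rw [one_div_pow]
        · positivity
    have hle : ∀ k, g k ≤ f k := by
      intro k
      by_cases h : Even k ∧ 1 ≤ k
      · have hnd : ¬ ((k:ℤ) ∣ (n:ℤ)) := by
          intro hd
          rw [Int.natCast_dvd_natCast] at hd
          have h2 : (2:ℕ) ∣ n := dvd_trans h.1.two_dvd hd
          rw [Nat.odd_iff] at hodd
          omega
        simp only [f, g, h, hnd, h.2, and_self, if_true, not_false_iff, true_and, le_refl]
      · have : g k = 0 := by simp only [g, h, if_false]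
        rw [this]
        simp only [f]; split_ifs <;> positivity
    have hlt : g (n+2) < f (n+2) := by
      have hodd2 : ¬ Even (n+2) := by
        rw [Nat.odd_iff] at hodd; simp [Nat.even_add, Nat.even_iff, hodd]
      have hnd : ¬ (((n+2:ℕ):ℤ) ∣ (n:ℤ)) := by
        intro hd
        rw [Int.natCast_dvd_natCast] at hd
        have := Nat.le_of_dvd (by omega) hd
        omega
      have h1 : g (n+2) = 0 := by simp [g, hodd2]
      have h2 : f (n+2) = 1 / q ^ (n+2) := by
        simp only [f]; rw [if_pos ⟨by omega, hnd⟩]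
      rw [h1, h2]; positivity
    have key : ∑' k, g k < ∑' k, f k := Summable.tsum_lt_tsum hle hlt hgsum (hfsum n)
    have hg_eq : ∑' k, g k = 1 / (q^2 - 1) := by
      have hinj : Function.Injective (fun j : ℕ => 2*j + 2) := by
        intro a b hab; simp only at hab; omega
      have hsupp : Function.support g ⊆ Set.range (fun j : ℕ => 2*j + 2) := by
        intro k hk
        simp only [Function.mem_support, g] at hk
        have h : Even k ∧ 1 ≤ k := by
          by_contra h; simp [h] at hk
        obtain ⟨m, hm⟩ := h.1
        refine ⟨m - 1, ?_⟩
        simp only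
        omega
      have heq := hinj.tsum_eq (f := g) hsupp
      rw [← heq]
      have hgv : ∀ j : ℕ, g (2*j+2) = (1/q^2) ^ (j+1) := by
        intro j
        have he : Even (2*j+2) := ⟨j+1, by ring⟩
        simp only [g, he, true_and, if_pos (by omega : 1 ≤ 2*j+2)]
        rw [one_div_pow, ← pow_mul]
        ring_nf
      simp_rw [hgv]
      have hr0 : (0:ℝ) ≤ 1/q^2 := by positivity
      have hr1 : 1/q^2 < 1 := by rw [div_lt_one (by positivity)]; nlinarith
      rw [geom_shift hr0 hr1 1, pow_one]
      rw [div_eq_div_iff (by nlinarith : (0:ℝ) < 1 - 1/q^2).ne' hq2.ne']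
      field_simp
    rw [qnorm, ← hg_eq]
    exact key
  · -- even case
    intro n hn heven
    set f : ℕ → ℝ := fun k => if 1 ≤ k ∧ ¬ ((k : ℤ) ∣ (n:ℤ)) then 1 / q ^ k else 0 with hfdef
    set h : ℕ → ℝ := fun k => if 3 ≤ k then 1 / q ^ k else 0 with hhdef
    have hhsum : Summable h := by
      refine Summable.of_nonneg_of_le (f := fun k : ℕ => (1/q)^k) ?_ ?_ hsum
      · intro k; simp only [h]; split_ifs <;> positivity
      · intro k; simp only [h]; split_ifs with hh
        · rw [one_div_pow]
        · positivity
    have hle : ∀ k, f k ≤ h k := by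
      intro k
      by_cases hk : 3 ≤ k
      · have hh : h k = 1/q^k := by simp [h, hk]
        rw [hh]
        simp only [f]; split_ifs with hc
        · exact le_rfl
        · positivity
      · have hf0 : f k = 0 := by
          simp only [f]
          rw [if_neg]
          rintro ⟨h1, h2⟩
          interval_cases k
          · exact h2 (one_dvd _)
          · apply h2
            rw [Int.natCast_dvd_natCast]
            exact heven.two_dvd
        rw [hf0]
        simp only [h]; split_ifs <;> positivity
    have key : ∑' k, f k ≤ ∑' k, h k := (hfsum n).tsum_le_tsum hle hhsum
    have hh_eq : ∑' k, h k = 1 / (q^2 * (q-1)) := by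
      have hinj : Function.Injective (fun j : ℕ => j + 3) := by
        intro a b hab; simp only at hab; omega
      have hsupp : Function.support h ⊆ Set.range (fun j : ℕ => j + 3) := by
        intro k hk
        simp only [Function.mem_support, h] at hk
        have h3 : 3 ≤ k := by by_contra hc; simp [hc] at hk
        refine ⟨k - 3, ?_⟩
        simp only
        omega
      have heq := hinj.tsum_eq (f := h) hsupp
      rw [← heq]
      have hhv : ∀ j : ℕ, h (j+3) = (1/q) ^ (j+3) := by
        intro j
        simp only [h, if_pos (by omega : 3 ≤ j+3)]
        rw [one_div_pow]
      simp_rw [hhv]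
      rw [geom_shift hqinv0 hqinv1 3]
      have hqne : q ≠ 0 := hq0.ne'
      have h1q : (1:ℝ) - 1/q ≠ 0 := by
        have : (0:ℝ) < 1 - 1/q := by linarith
        exact this.ne'
      have hq1ne : q - 1 ≠ 0 := by linarith
      field_simp
    rw [qnorm]
    calc ∑' k, f k ≤ ∑' k, h k := key
      _ = 1 / (q^2 * (q-1)) := hh_eq
  · -- golden ratio part
    rw [div_lt_div_iff₀ hq3 hq2]
    have hs5 : Real.sqrt 5 ^ 2 = 5 := Real.sq_sqrt (by norm_num)
    have hs5' : (0:ℝ) ≤ Real.sqrt 5 := Real.sqrt_nonneg 5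
    constructor
    · intro hlt
      have hkey : 0 < q^2 - q - 1 := by nlinarith
      have h2q : Real.sqrt 5 < 2*q - 1 := by
        rw [show Real.sqrt 5 < 2*q - 1 ↔ 5 < (2*q-1)^2 from Real.sqrt_lt' (by linarith)]
        nlinarith
      linarith
    · intro hgt
      have h2q : Real.sqrt 5 < 2*q - 1 := by linarith
      have hsq : 5 < (2*q-1)^2 := by nlinarith
      nlinarith
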